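/- For all n ≥ k ≥ 1, the sum of q^{vrs(w)} over all RGFs w of length n with maximum letter k equals S̃_q(n,k). -/

import Mathlib

open Finset

variable {n : ℕ}

/-- Positions of leftmost occurrences of letters in the word `w`. -/
def Lset (w : Fin n → ℕ) : Finset (Fin n) :=
  Finset.univ.filter fun i => ∀ j, j < i → w j ≠ w i

/-- Positions of rightmost occurrences of letters in the word `w`. -/
def Rset (w : Fin n → ℕ) : Finset (Fin n) :=
  Finset.univ.filter fun i => ∀ j, i < j → w j ≠ w i

/-- The maximum letter of the word `w`. -/
def bk (w : Fin n → ℕ) : ℕ := Finset.univ.sup w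

/-- The (1-indexed) position of the rightmost `1` in `w`. -/
def pro (w : Fin n → ℕ) : ℕ :=
  (Finset.univ.filter fun i => w i = 1).sup fun i => (i : ℕ) + 1

def lsi (w : Fin n → ℕ) (i : Fin n) : ℕ :=
  ((Lset w).filter fun j => j < i ∧ w j < w i).card

def rsi (w : Fin n → ℕ) (i : Fin n) : ℕ :=
  ((Rset w).filter fun j => i < j ∧ w j < w i).card

def vlsi (w : Fin n → ℕ) (i : Fin n) : ℕ :=
  if i ∉ Rset w ∧ pro w < (i : ℕ) + 1 then lsi w i - 1
  else if i ∈ Rset w ∧ (i : ℕ) + 1 < pro w then lsi w i + 1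
  else lsi w i

def vrsi (w : Fin n → ℕ) (i : Fin n) : ℕ :=
  if i ∉ Rset w ∧ pro w < (i : ℕ) + 1 then rsi w i + 1
  else if i ∈ Rset w ∧ (i : ℕ) + 1 < pro w then rsi w i - 1
  else rsi w i

def ls (w : Fin n → ℕ) : ℕ := ∑ i, lsi w i
def rs (w : Fin n → ℕ) : ℕ := ∑ i, rsi w i
def vls (w : Fin n → ℕ) : ℕ := ∑ i, vlsi w i
def vrs (w : Fin n → ℕ) : ℕ := ∑ i, vrsi w i

/-- `w` is a restricted growth function: positive letters, `w₁ = 1`, and each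
letter is at most one more than the maximum of the preceding letters. -/
def IsRGF (w : Fin n → ℕ) : Prop :=
  (∀ i, 1 ≤ w i) ∧ (∀ i : Fin n, (i : ℕ) = 0 → w i = 1) ∧
    ∀ i : Fin n, 0 < (i : ℕ) → w i ≤ (Finset.univ.filter fun j => j < i).sup w + 1

/-- The ascent set of `w`. -/
def AscSet (w : Fin n → ℕ) : Finset (Fin n) :=
  Finset.univ.filter fun i => ∃ j : Fin n, (j : ℕ) = (i : ℕ) + 1 ∧ w i < w j

open Polynomial in
/-- The q-integer [k]_q. -/
noncomputable def qint (k : ℕ) : Polynomial ℚ := ∑ i ∈ Finset.range k, X ^ i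

/-- The q-Stirling number S̃_q(n,k). -/
noncomputable def Sqt : ℕ → ℕ → Polynomial ℚ
  | 0, 0 => 1
  | 0, _ + 1 => 0
  | _ + 1, 0 => 0
  | n + 1, k + 1 => Sqt n k + qint (k + 1) * Sqt n (k + 1)

namespace RGFaux
open Fin

/-- the statistic c_j -/
def cstat (w : Fin n → ℕ) (a : ℕ) : ℕ :=
  (univ.filter fun i => a < w i ∧ ∀ l, i ≤ l → w l ≠ a).card

lemma card_filter_succ (P : Fin (n+1) → Prop) [DecidablePred P] :
    (univ.filter P).card
      = (univ.filter fun i : Fin n => P (castSucc i)).card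
        + (if P (last n) then 1 else 0) := by
  rw [Finset.card_filter, Finset.card_filter, Fin.sum_univ_castSucc]

lemma sup_filter_succ (P : Fin (n+1) → Prop) [DecidablePred P] (f : Fin (n+1) → ℕ) :
    (univ.filter P).sup f
      = max ((univ.filter fun i : Fin n => P (castSucc i)).sup fun i => f (castSucc i))
          (if P (last n) then f (last n) else 0) := by
  apply le_antisymm
  · apply Finset.sup_le
    intro b hb
    simp only [mem_filter, mem_univ, true_and] at hb
    rcases Fin.eq_castSucc_or_eq_last b with ⟨j, rfl⟩ | rfl
    · have hm : j ∈ univ.filter (fun i : Fin n => P (castSucc i)) :=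
        Finset.mem_filter.mpr ⟨Finset.mem_univ _, hb⟩
      exact le_max_of_le_left (Finset.le_sup (f := fun i : Fin n => f (castSucc i)) hm)
    · exact le_max_of_le_right (if_pos hb).ge
  · apply max_le
    · apply Finset.sup_le
      intro b hb
      simp only [mem_filter, mem_univ, true_and] at hb
      exact Finset.le_sup (by simp [hb])
    · split_ifs with h
      · exact Finset.le_sup (by simp [h])
      · exact Nat.zero_le _

lemma filter_eq_filter_univ {m : ℕ} (s : Finset (Fin m)) (q : Fin m → Prop) [DecidablePred q] :
    s.filter q = univ.filter fun j => j ∈ s ∧ q j := by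
  ext j; simp [Finset.mem_filter]

lemma bk_snoc (p : Fin n → ℕ) (a : ℕ) : bk (Fin.snoc p a) = max (bk p) a := by
  unfold bk
  have : (univ : Finset (Fin (n+1))) = univ.filter (fun _ => True) := by simp
  rw [this, sup_filter_succ]
  simp only [if_true, Fin.snoc_last, Fin.snoc_castSucc]
  congr 1
  simp

lemma pro_snoc (p : Fin n → ℕ) (a : ℕ) (ha : a ≠ 1) : pro (Fin.snoc p a) = pro p := by
  unfold pro
  rw [sup_filter_succ]
  simp only [Fin.snoc_last, Fin.snoc_castSucc, ha, if_false]
  simp [Fin.coe_castSucc]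

lemma pro_snoc_one (p : Fin n → ℕ) : pro (Fin.snoc p 1) = n + 1 := by
  unfold pro
  apply le_antisymm
  · apply Finset.sup_le; intro b _; omega
  · have hm : last n ∈ univ.filter (fun i : Fin (n+1) => (Fin.snoc p 1 : Fin (n+1) → ℕ) i = 1) :=
      Finset.mem_filter.mpr ⟨Finset.mem_univ _, by simp⟩
    simpa using Finset.le_sup (f := fun i : Fin (n+1) => (i : ℕ) + 1) hm

lemma pro_le (w : Fin n → ℕ) : pro w ≤ n := by
  apply Finset.sup_le; intro b _; omega

lemma mem_Rset_castSucc (p : Fin n → ℕ) (a : ℕ) (i : Fin n) :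
    castSucc i ∈ Rset (Fin.snoc p a) ↔ i ∈ Rset p ∧ p i ≠ a := by
  simp only [Rset, mem_filter, mem_univ, true_and, Fin.snoc_castSucc]
  constructor
  · intro h
    refine ⟨fun j hij => ?_, fun hia => ?_⟩
    · have := h (castSucc j) (by simpa using hij)
      simpa using this
    · have := h (last n) (Fin.castSucc_lt_last i)
      simp [hia] at this
  · rintro ⟨h1, h2⟩ j hj
    rcases Fin.eq_castSucc_or_eq_last j with ⟨j', rfl⟩ | rfl
    · simpa using h1 j' (by simpa using hj)
    · simp only [Fin.snoc_last, Fin.snoc_castSucc]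
      exact fun h => h2 h.symm
  
lemma last_mem_Rset (w : Fin (n+1) → ℕ) : last n ∈ Rset w := by
  simp only [Rset, mem_filter, mem_univ, true_and]
  intro j hj
  exact absurd (Fin.le_last j) (not_le.mpr hj)

lemma rsi_snoc_castSucc (p : Fin n → ℕ) (a : ℕ) (i : Fin n) :
    rsi (Fin.snoc p a) (castSucc i)
      = ((Rset p).filter fun l => p l ≠ a ∧ i < l ∧ p l < p i).card
        + (if a < p i then 1 else 0) := by
  classical
  rw [rsi, filter_eq_filter_univ, card_filter_succ]
  congr 1
  · rw [filter_eq_filter_univ (Rset p)]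
    congr 1
    ext j
    simp only [mem_filter, mem_univ, true_and, mem_Rset_castSucc, Fin.snoc_castSucc,
      Fin.castSucc_lt_castSucc_iff]
    tauto
  · simp [last_mem_Rset, Fin.castSucc_lt_last]

lemma rsi_snoc_last (p : Fin n → ℕ) (a : ℕ) :
    rsi (Fin.snoc p a) (last n) = 0 := by
  unfold rsi
  rw [Finset.card_eq_zero, Finset.filter_eq_empty_iff]
  intro l _
  simp only [not_and]
  intro h
  exact absurd (Fin.le_last l) (not_le.mpr h)

lemma Rset_unique {w : Fin n → ℕ} {s t : Fin n} (hs : s ∈ Rset w) (ht : t ∈ Rset w)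
    (h : w s = w t) : s = t := by
  simp only [Rset, mem_filter, mem_univ, true_and] at hs ht
  rcases lt_trichotomy s t with hl | he | hl
  · exact absurd h.symm (hs t hl)
  · exact he
  · exact absurd h (ht s hl)

lemma exists_rightmost {w : Fin n → ℕ} {a : ℕ} (h : ∃ i, w i = a) :
    ∃ t, w t = a ∧ t ∈ Rset w ∧ ∀ l, t < l → w l ≠ a := by
  classical
  obtain ⟨i0, hi0⟩ := h
  have hne : (univ.filter fun i => w i = a).Nonempty := ⟨i0, by simp [hi0]⟩
  set t := (univ.filter fun i => w i = a).max' hne with htdef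
  have htmem := Finset.max'_mem _ hne
  simp only [mem_filter, mem_univ, true_and] at htmem
  have hmax : ∀ l, w l = a → l ≤ t := fun l hl => Finset.le_max' _ _ (by simp [hl])
  have hright : ∀ l, t < l → w l ≠ a := fun l hlt hla => absurd (hmax l hla) (not_le.mpr hlt)
  refine ⟨t, htmem, ?_, hright⟩
  simp only [Rset, mem_filter, mem_univ, true_and]
  intro j hj
  rw [htmem]
  exact hright j hj

lemma cstat_eq_of_rightmost {w : Fin n → ℕ} {a : ℕ} {t : Fin n} (hta : w t = a)
    (ht : ∀ l, t < l → w l ≠ a) :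
    cstat w a = (univ.filter fun i => t < i ∧ a < w i).card := by
  unfold cstat; congr 1; ext i
  simp only [mem_filter, mem_univ, true_and]
  constructor
  · rintro ⟨h1, h2⟩
    refine ⟨?_, h1⟩
    by_contra hle
    exact h2 t (not_lt.mp hle) hta
  · rintro ⟨h1, h2⟩
    exact ⟨h2, fun l hl => ht l (lt_of_lt_of_le h1 hl)⟩

lemma cstat_snoc_ne (p : Fin n → ℕ) (a l : ℕ) (hl : l ≠ a) :
    cstat (Fin.snoc p a) l = cstat p l + (if l < a then 1 else 0) := by
  classical
  unfold cstat
  rw [card_filter_succ]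
  congr 1
  · congr 1; ext i
    simp only [mem_filter, mem_univ, true_and, Fin.snoc_castSucc]
    constructor
    · rintro ⟨h1, h2⟩
      refine ⟨h1, fun m hm => ?_⟩
      have := h2 (castSucc m) (by simpa using hm)
      simpa using this
    · rintro ⟨h1, h2⟩
      refine ⟨h1, fun m hm => ?_⟩
      rcases Fin.eq_castSucc_or_eq_last m with ⟨m', rfl⟩ | rfl
      · simpa using h2 m' (by simpa using hm)
      · simp only [Fin.snoc_last]
        exact fun h => hl h.symm
  · have hlast : ∀ m : Fin (n+1), last n ≤ m → (Fin.snoc p a : Fin (n+1) → ℕ) m ≠ l := by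
      intro m hm
      have : m = last n := Fin.last_le_iff.mp hm
      subst this
      simp only [Fin.snoc_last]
      exact fun h => hl h.symm
    have hne : ¬ a = l := fun h => hl h.symm
    simp [Fin.snoc_last, hlast, hne]

lemma cstat_snoc_self (p : Fin n → ℕ) (a : ℕ) : cstat (Fin.snoc p a) a = 0 := by
  unfold cstat
  rw [Finset.card_eq_zero, Finset.filter_eq_empty_iff]
  intro i _
  simp only [not_and]
  intro _ h
  exact h (last n) (Fin.le_last i) (by simp)

lemma cstat_of_bk_le (p : Fin n → ℕ) (a : ℕ) (h : bk p ≤ a) : cstat p a = 0 := by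
  rw [cstat, Finset.card_eq_zero, Finset.filter_eq_empty_iff]
  intro i _
  simp only [not_and]
  intro hlt
  have := Finset.le_sup (f := p) (mem_univ i)
  exact absurd hlt (by unfold bk at h; omega)

lemma rsi_split (p : Fin n → ℕ) (a : ℕ) {t : Fin n} (hta : p t = a) (htR : t ∈ Rset p)
    (i : Fin n) :
    rsi p i = ((Rset p).filter fun l => p l ≠ a ∧ i < l ∧ p l < p i).card
      + (if i < t ∧ a < p i then 1 else 0) := by
  classical
  unfold rsi
  have hsplit : (Rset p).filter (fun l => i < l ∧ p l < p i)
      = ((Rset p).filter fun l => p l ≠ a ∧ i < l ∧ p l < p i)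
        ∪ ((Rset p).filter fun l => p l = a ∧ i < l ∧ p l < p i) := by
    rw [← Finset.filter_or]
    apply Finset.filter_congr
    intro l _
    constructor
    · intro h; by_cases hc : p l = a
      · exact Or.inr ⟨hc, h⟩
      · exact Or.inl ⟨hc, h⟩
    · rintro (⟨_, h⟩ | ⟨_, h⟩) <;> exact h
  rw [hsplit, Finset.card_union_of_disjoint]
  · congr 1
    by_cases hc : i < t ∧ a < p i
    · rw [if_pos hc]
      rw [show ((Rset p).filter fun l => p l = a ∧ i < l ∧ p l < p i) = {t} from ?_]
      · simp
      · ext l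
        simp only [mem_filter, Finset.mem_singleton]
        constructor
        · rintro ⟨hR, h1, _, _⟩; exact Rset_unique hR htR (h1.trans hta.symm)
        · rintro rfl; exact ⟨htR, hta, hc.1, hta ▸ hc.2⟩
    · rw [if_neg hc, Finset.card_eq_zero, Finset.filter_eq_empty_iff]
      rintro l hl ⟨h1, h2, h3⟩
      have hlt : l = t := Rset_unique hl htR (h1.trans hta.symm)
      subst hlt
      exact hc ⟨h2, h1 ▸ h3⟩
  · rw [Finset.disjoint_left]
    intro x hx1 hx2
    simp only [mem_filter] at hx1 hx2
    exact hx1.2.1 hx2.2.1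

lemma vrsi_congr {m m' : ℕ} {w : Fin m → ℕ} {w' : Fin m' → ℕ} {i : Fin m} {i' : Fin m'}
    (h1 : i ∈ Rset w ↔ i' ∈ Rset w') (h2 : rsi w i = rsi w' i')
    (h3 : pro w = pro w') (h4 : (i : ℕ) = (i' : ℕ)) :
    vrsi w i = vrsi w' i' := by
  unfold vrsi
  rw [h2, h3, h4]
  by_cases hA : i' ∈ Rset w'
  · have hA' : i ∈ Rset w := h1.mpr hA
    simp [hA, hA']
  · have hA' : i ∉ Rset w := fun h => hA (h1.mp h)
    simp [hA, hA']

lemma sup_filter_lt_castSucc (p : Fin n → ℕ) (a : ℕ) (i : Fin n) :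
    ((univ : Finset (Fin (n+1))).filter fun j => j < castSucc i).sup (Fin.snoc p a)
      = ((univ : Finset (Fin n)).filter fun j => j < i).sup p := by
  rw [sup_filter_succ]
  simp only [Fin.snoc_castSucc, Fin.castSucc_lt_castSucc_iff]
  rw [if_neg (not_lt.mpr (Fin.le_last (castSucc i)))]
  simp

lemma sup_filter_lt_last (p : Fin n → ℕ) (a : ℕ) :
    ((univ : Finset (Fin (n+1))).filter fun j => j < last n).sup (Fin.snoc p a) = bk p := by
  rw [sup_filter_succ]
  rw [if_neg (lt_irrefl _)]
  simp only [Fin.snoc_castSucc, Fin.castSucc_lt_last]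
  simp [bk]

lemma isRGF_snoc {p : Fin n → ℕ} (hp : IsRGF p) {a : ℕ} (h1 : 1 ≤ a) (h2 : a ≤ bk p + 1) :
    IsRGF (Fin.snoc p a) := by
  obtain ⟨hpos, hfirst, hgrow⟩ := hp
  refine ⟨?_, ?_, ?_⟩
  · intro i
    rcases Fin.eq_castSucc_or_eq_last i with ⟨j, rfl⟩ | rfl
    · simpa using hpos j
    · simpa using h1
  · intro i hi
    rcases Fin.eq_castSucc_or_eq_last i with ⟨j, rfl⟩ | rfl
    · have hj : (j:ℕ) = 0 := by simpa using hi
      simpa using hfirst j hj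
    · have hn : n = 0 := by simpa using hi
      subst hn
      have hbk : bk p = 0 := by simp [bk]
      simp only [Fin.snoc_last]
      omega
  · intro i hi
    rcases Fin.eq_castSucc_or_eq_last i with ⟨j, rfl⟩ | rfl
    · rw [sup_filter_lt_castSucc, Fin.snoc_castSucc]
      exact hgrow j (by simpa using hi)
    · rw [sup_filter_lt_last, Fin.snoc_last]
      exact h2

lemma init_apply (w : Fin (n+1) → ℕ) (j : Fin n) : Fin.init w j = w (castSucc j) := rfl

lemma isRGF_init {w : Fin (n+1) → ℕ} (hw : IsRGF w) : IsRGF (Fin.init w) := by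
  obtain ⟨hpos, hfirst, hgrow⟩ := hw
  refine ⟨fun j => hpos _, fun j hj => hfirst _ (by simpa using hj), fun j hj => ?_⟩
  have hs := Fin.snoc_init_self w
  have := hgrow (castSucc j) (by simpa using hj)
  rw [← hs, sup_filter_lt_castSucc] at this
  rw [init_apply]
  rw [← hs] at this
  simpa [init_apply] using this

lemma bk_eq_max (w : Fin (n+1) → ℕ) : bk w = max (bk (Fin.init w)) (w (last n)) := by
  conv_lhs => rw [← Fin.snoc_init_self w]
  rw [bk_snoc]

lemma last_le_bk_init {w : Fin (n+1) → ℕ} (hw : IsRGF w) :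
    1 ≤ w (last n) ∧ w (last n) ≤ bk (Fin.init w) + 1 := by
  obtain ⟨hpos, hfirst, hgrow⟩ := hw
  refine ⟨hpos _, ?_⟩
  rcases Nat.eq_zero_or_pos n with rfl | hn
  · have : w (last 0) = 1 := hfirst _ rfl
    omega
  · have := hgrow (last n) (by simpa using hn)
    have hs := Fin.snoc_init_self w
    rw [← hs, sup_filter_lt_last] at this
    rw [← hs] at this ⊢
    simpa using this

lemma rgf_surj {p : Fin n → ℕ} (hp : IsRGF p) {v : ℕ} (h1 : 1 ≤ v) (h2 : v ≤ bk p) :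
    ∃ i, p i = v := by
  obtain ⟨hpos, hfirst, hgrow⟩ := hp
  have hn : 0 < n := by
    by_contra h
    have hn0 : n = 0 := by omega
    subst hn0
    have : bk p = 0 := by simp [bk]
    omega
  have key : ∀ m : ℕ, m < n → ∀ v, 1 ≤ v →
      v ≤ ((univ.filter fun j : Fin n => (j:ℕ) ≤ m).sup p) → ∃ i, p i = v := by
    intro m
    induction m with
    | zero =>
      intro hm v hv1 hv2
      have hset : (univ.filter fun j : Fin n => (j:ℕ) ≤ 0) = {⟨0, hm⟩} := by
        ext j; simp [Fin.ext_iff]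
      rw [hset, Finset.sup_singleton] at hv2
      rw [hfirst ⟨0,hm⟩ rfl] at hv2
      exact ⟨⟨0,hm⟩, by rw [hfirst ⟨0,hm⟩ rfl]; omega⟩
    | succ m ih =>
      intro hm v hv1 hv2
      have hm' : m < n := by omega
      have hset : (univ.filter fun j : Fin n => (j:ℕ) ≤ m+1)
          = insert ⟨m+1, hm⟩ (univ.filter fun j : Fin n => (j:ℕ) ≤ m) := by
        ext j
        simp only [mem_filter, mem_univ, true_and, Finset.mem_insert, Fin.ext_iff]
        omega
      rw [hset, Finset.sup_insert] at hv2
      have hlt : ((univ : Finset (Fin n)).filter fun j => j < (⟨m+1, hm⟩ : Fin n))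
          = (univ.filter fun j : Fin n => (j:ℕ) ≤ m) := by
        ext j
        simp only [mem_filter, mem_univ, true_and, Fin.lt_def]
        omega
      have hgb := hgrow ⟨m+1, hm⟩ (by simp)
      rw [hlt] at hgb
      by_cases hc : v ≤ (univ.filter fun j : Fin n => (j:ℕ) ≤ m).sup p
      · exact ih hm' v hv1 hc
      · have hp1 : v ≤ p ⟨m+1, hm⟩ := by
          rcases le_max_iff.mp hv2 with h | h
          · exact h
          · omega
        have : p ⟨m+1, hm⟩ = v := by omega
        exact ⟨_, this⟩
  have huniv : (univ.filter fun j : Fin n => (j:ℕ) ≤ n-1) = univ := by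
    ext j
    simp only [mem_filter, mem_univ, true_and, iff_true]
    omega
  exact key (n-1) (by omega) v h1 (by rw [huniv]; exact h2)

lemma vrsi_snoc_last (p : Fin n → ℕ) (a : ℕ) : vrsi (Fin.snoc p a) (last n) = 0 := by
  unfold vrsi
  rw [if_neg, if_neg]
  · exact rsi_snoc_last p a
  · rintro ⟨_, h⟩
    have := pro_le (Fin.snoc p a)
    simp only [Fin.val_last] at h
    omega
  · rintro ⟨h, _⟩
    exact h (last_mem_Rset _)

lemma pro_eq_rightmost_one {p : Fin n → ℕ} {t1 : Fin n} (h1 : p t1 = 1)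
    (hmax : ∀ l, t1 < l → p l ≠ 1) : pro p = (t1:ℕ) + 1 := by
  unfold pro
  apply le_antisymm
  · apply Finset.sup_le
    intro b hb
    simp only [mem_filter, mem_univ, true_and] at hb
    have hble : b ≤ t1 := by
      by_contra hc
      exact hmax b (not_le.mp hc) hb
    have := Fin.le_def.mp hble
    omega
  · exact Finset.le_sup (f := fun i : Fin n => (i:ℕ)+1)
      (Finset.mem_filter.mpr ⟨mem_univ _, h1⟩)

lemma vrs_snoc_newmax {p : Fin n → ℕ} (hp : IsRGF p) :
    vrs (Fin.snoc p (bk p + 1)) = vrs p := by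
  unfold vrs
  rw [Fin.sum_univ_castSucc, vrsi_snoc_last, add_zero]
  apply Finset.sum_congr rfl
  intro i _
  have hpi : p i ≤ bk p := Finset.le_sup (mem_univ i)
  have hpine : p i ≠ bk p + 1 := by omega
  have hbk1 : 1 ≤ bk p := le_trans (hp.1 i) hpi
  apply vrsi_congr
  · rw [mem_Rset_castSucc]
    exact ⟨fun h => h.1, fun h => ⟨h, hpine⟩⟩
  · rw [rsi_snoc_castSucc, if_neg (by omega), add_zero]
    unfold rsi
    congr 1
    apply Finset.filter_congr
    intro l _
    have hpl : p l ≤ bk p := Finset.le_sup (mem_univ l)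
    constructor
    · rintro ⟨_, h⟩; exact h
    · intro h; exact ⟨by omega, h⟩
  · exact pro_snoc p _ (by omega)
  · simp

lemma vrs_snoc_one {p : Fin n → ℕ} (hp : IsRGF p) (hn : 0 < n) :
    vrs (Fin.snoc p 1) = vrs p := by
  obtain ⟨t, ht1, htR, htmax⟩ := exists_rightmost ⟨⟨0, hn⟩, hp.2.1 ⟨0, hn⟩ rfl⟩
  have hpro : pro p = (t:ℕ) + 1 := pro_eq_rightmost_one ht1 htmax
  have hprw : pro (Fin.snoc p 1) = n + 1 := pro_snoc_one p
  unfold vrs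
  rw [Fin.sum_univ_castSucc, vrsi_snoc_last, add_zero]
  apply Finset.sum_congr rfl
  intro i _
  have e1 : rsi (Fin.snoc p 1) (castSucc i)
      = ((Rset p).filter fun l => p l ≠ 1 ∧ i < l ∧ p l < p i).card
        + (if 1 < p i then 1 else 0) := rsi_snoc_castSucc p 1 i
  have e2 : rsi p i
      = ((Rset p).filter fun l => p l ≠ 1 ∧ i < l ∧ p l < p i).card
        + (if i < t ∧ 1 < p i then 1 else 0) := rsi_split p 1 ht1 htR i
  set B := ((Rset p).filter fun l => p l ≠ 1 ∧ i < l ∧ p l < p i).card with hBdef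
  have hm := mem_Rset_castSucc p 1 i
  have hiLt : (i:ℕ) < n := i.isLt
  rcases lt_trichotomy i t with hit | hit | hit
  · -- i < t
    have hitv : (i:ℕ) < (t:ℕ) := Fin.lt_def.mp hit
    have hite : (if i < t ∧ 1 < p i then 1 else 0) = (if 1 < p i then 1 else 0) := by
      by_cases h : 1 < p i
      · rw [if_pos ⟨hit, h⟩, if_pos h]
      · rw [if_neg (fun hc => h hc.2), if_neg h]
    rw [hite] at e2
    unfold vrsi
    simp only [Fin.coe_castSucc, hprw, hpro, e1, e2]
    by_cases hR : i ∈ Rset p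
    · have hR' : castSucc i ∈ Rset (Fin.snoc p 1) := by
        rw [hm]
        refine ⟨hR, fun hpi => ?_⟩
        simp only [Rset, mem_filter, mem_univ, true_and] at hR
        exact hR t hit (ht1.trans hpi.symm)
      simp only [hR, hR', not_true_eq_false, false_and, if_false, true_and]
      split_ifs <;> omega
    · have hR' : castSucc i ∉ Rset (Fin.snoc p 1) := fun h => hR (hm.mp h).1
      simp only [hR, hR', not_false_eq_true, true_and, false_and, if_false]
      split_ifs <;> omega
  · -- i = t
    subst hit
    have hpi1 : p i = 1 := ht1
    have hR' : castSucc i ∉ Rset (Fin.snoc p 1) := by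
      rw [hm]
      rintro ⟨_, h⟩
      exact h hpi1
    unfold vrsi
    simp only [Fin.coe_castSucc, hprw, hpro, e1, e2]
    simp only [htR, hR', not_true_eq_false, not_false_eq_true, true_and, false_and, if_false]
    split_ifs <;> omega
  · -- t < i
    have hitv : (t:ℕ) < (i:ℕ) := Fin.lt_def.mp hit
    have hpi1 : 1 < p i := by
      have := hp.1 i
      have := htmax i hit
      omega
    have hR2 : castSucc i ∈ Rset (Fin.snoc p 1) ↔ i ∈ Rset p := by
      rw [hm]
      exact ⟨fun h => h.1, fun h => ⟨h, htmax i hit⟩⟩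
    unfold vrsi
    simp only [Fin.coe_castSucc, hprw, hpro, e1, e2]
    by_cases hR : i ∈ Rset p
    · have hR' := hR2.mpr hR
      simp only [hR, hR', not_true_eq_false, false_and, if_false, true_and]
      split_ifs <;> omega
    · have hR' : castSucc i ∉ Rset (Fin.snoc p 1) := fun h => hR (hR2.mp h)
      simp only [hR, hR', not_false_eq_true, true_and, false_and, if_false]
      split_ifs <;> omega

lemma vrs_snoc_mid {p : Fin n → ℕ} (hp : IsRGF p) {a : ℕ} (ha2 : 2 ≤ a) (hab : a ≤ bk p) :
    vrs (Fin.snoc p a) = vrs p + 1 + cstat p a := by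
  have hn : 0 < n := by
    rcases Nat.eq_zero_or_pos n with rfl | h
    · exfalso
      have : bk p = 0 := by simp [bk]
      omega
    · exact h
  obtain ⟨t, hta, htR, htmax⟩ := exists_rightmost (rgf_surj hp (by omega) hab)
  obtain ⟨t1, ht1, htR1, htmax1⟩ := exists_rightmost ⟨⟨0, hn⟩, hp.2.1 ⟨0, hn⟩ rfl⟩
  have hpro : pro p = (t1:ℕ) + 1 := pro_eq_rightmost_one ht1 htmax1
  have hprw : pro (Fin.snoc p a) = pro p := pro_snoc p a (by omega)
  have htne : (t:ℕ) ≠ (t1:ℕ) := by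
    intro h
    have : t = t1 := Fin.ext h
    rw [this, ht1] at hta
    omega
  have key : ∀ i : Fin n, vrsi (Fin.snoc p a) (castSucc i)
      = vrsi p i + ((if t < i ∧ a < p i then 1 else 0) + (if i = t then 1 else 0)) := by
    intro i
    have e1 : rsi (Fin.snoc p a) (castSucc i)
        = ((Rset p).filter fun l => p l ≠ a ∧ i < l ∧ p l < p i).card
          + (if a < p i then 1 else 0) := rsi_snoc_castSucc p a i
    have e2 : rsi p i
        = ((Rset p).filter fun l => p l ≠ a ∧ i < l ∧ p l < p i).card
          + (if i < t ∧ a < p i then 1 else 0) := rsi_split p a hta htR i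
    set B := ((Rset p).filter fun l => p l ≠ a ∧ i < l ∧ p l < p i).card with hBdef
    have hm := mem_Rset_castSucc p a i
    have hiLt : (i:ℕ) < n := i.isLt
    have hBpos : (i:ℕ) < (t1:ℕ) → a < p i → 0 < B := by
      intro h1 h2
      apply Finset.card_pos.mpr
      refine ⟨t1, Finset.mem_filter.mpr ⟨htR1, ?_, Fin.lt_def.mpr h1, ?_⟩⟩
      · rw [ht1]; omega
      · rw [ht1]; omega
    rcases lt_trichotomy i t with hit | hit | hit
    · -- i < t
      have hitv : (i:ℕ) < (t:ℕ) := Fin.lt_def.mp hit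
      have hite : (if i < t ∧ a < p i then 1 else 0) = (if a < p i then 1 else 0) := by
        by_cases h : a < p i
        · rw [if_pos ⟨hit, h⟩, if_pos h]
        · rw [if_neg (fun hc => h hc.2), if_neg h]
      rw [hite] at e2
      have hcond1 : ¬(t < i ∧ a < p i) := fun h => absurd (Fin.lt_def.mp h.1) (by omega)
      have hcond2 : i ≠ t := Fin.ne_of_lt hit
      rw [if_neg hcond1, if_neg hcond2, add_zero, add_zero]
      apply vrsi_congr
      · rw [hm]
        constructor
        · exact fun h => h.1
        · intro h
          refine ⟨h, fun hpi => ?_⟩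
          exact hcond2 (Rset_unique h htR (hpi.trans hta.symm))
      · rw [e1, e2]
      · exact hprw
      · simp
    · -- i = t
      subst hit
      have hR' : castSucc i ∉ Rset (Fin.snoc p a) := by
        rw [hm]
        rintro ⟨_, h⟩
        exact h hta
      have hrs1 : rsi (Fin.snoc p a) (castSucc i) = B := by
        rw [e1, if_neg (by rw [hta]; omega), add_zero]
      have hrs2 : rsi p i = B := by
        rw [e2, if_neg (fun h => absurd h.1 (lt_irrefl i)), add_zero]
      have hc1 : ¬(i < i ∧ a < p i) := fun h => absurd h.1 (lt_irrefl i)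
      rw [if_neg hc1, if_pos rfl]
      unfold vrsi
      simp only [Fin.coe_castSucc, hprw, hpro, hrs1, hrs2]
      simp only [htR, hR', not_true_eq_false, not_false_eq_true, true_and, false_and,
        if_false]
      by_cases hord : (i:ℕ) < (t1:ℕ)
      · have hB1 : 0 < B := by
          apply Finset.card_pos.mpr
          refine ⟨t1, Finset.mem_filter.mpr ⟨htR1, ?_, Fin.lt_def.mpr hord, ?_⟩⟩
          · rw [ht1]; omega
          · rw [ht1, hta]; omega
        split_ifs <;> omega
      · split_ifs <;> omega
    · -- t < i
      have hitv : (t:ℕ) < (i:ℕ) := Fin.lt_def.mp hit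
      have hpia : p i ≠ a := htmax i hit
      have hc2 : i ≠ t := Fin.ne_of_gt hit
      rw [if_neg hc2, add_zero]
      have hite2 : (if i < t ∧ a < p i then 1 else 0) = 0 := by
        rw [if_neg (fun h => absurd (Fin.lt_def.mp h.1) (by omega))]
      rw [hite2, add_zero] at e2
      have hite3 : (if t < i ∧ a < p i then 1 else 0) = (if a < p i then 1 else 0) := by
        by_cases h : a < p i
        · rw [if_pos ⟨hit, h⟩, if_pos h]
        · rw [if_neg (fun hc => h hc.2), if_neg h]
      rw [hite3]
      have hR2 : castSucc i ∈ Rset (Fin.snoc p a) ↔ i ∈ Rset p := by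
        rw [hm]
        exact ⟨fun h => h.1, fun h => ⟨h, hpia⟩⟩
      unfold vrsi
      simp only [Fin.coe_castSucc, hprw, hpro, e1, e2]
      by_cases hR : i ∈ Rset p
      · have hR' := hR2.mpr hR
        simp only [hR, hR', not_true_eq_false, false_and, if_false, true_and]
        by_cases hord : (i:ℕ) < (t1:ℕ)
        · by_cases hord2 : a < p i
          · have hB1 : 0 < B := hBpos hord hord2
            split_ifs <;> omega
          · split_ifs <;> omega
        · split_ifs <;> omega
      · have hR' : castSucc i ∉ Rset (Fin.snoc p a) := fun h => hR (hR2.mp h)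
        simp only [hR, hR', not_false_eq_true, true_and, false_and, if_false]
        split_ifs <;> omega
  unfold vrs
  rw [Fin.sum_univ_castSucc, vrsi_snoc_last, add_zero]
  rw [Finset.sum_congr rfl (fun i _ => key i), Finset.sum_add_distrib,
    Finset.sum_add_distrib]
  have h1 : ∑ i : Fin n, (if t < i ∧ a < p i then 1 else 0) = cstat p a := by
    rw [cstat_eq_of_rightmost hta htmax, Finset.card_filter]
  have h2 : ∑ i : Fin n, (if i = t then 1 else 0) = 1 := by
    simp [Finset.sum_ite_eq']
  rw [h1, h2]
  omega

lemma rgf_le {w : Fin n → ℕ} (hw : IsRGF w) : ∀ i : Fin n, w i ≤ (i:ℕ) + 1 := by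
  obtain ⟨hpos, hfirst, hgrow⟩ := hw
  have key : ∀ m, ∀ h : m < n, w ⟨m, h⟩ ≤ m + 1 := by
    intro m
    induction m using Nat.strong_induction_on with
    | _ m ih =>
      intro h
      rcases Nat.eq_zero_or_pos m with rfl | hm
      · rw [hfirst ⟨0, h⟩ rfl]
      · have hg := hgrow ⟨m, h⟩ (by simpa using hm)
        have hsup : ((univ : Finset (Fin n)).filter fun j => j < (⟨m, h⟩ : Fin n)).sup w ≤ m := by
          apply Finset.sup_le
          intro j hj
          simp only [mem_filter, mem_univ, true_and, Fin.lt_def] at hj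
          have := ih j.1 hj j.isLt
          simp only [Fin.eta] at this
          omega
        omega
  intro i
  have := key i.1 i.isLt
  simpa using this

lemma bk_le {w : Fin n → ℕ} (hw : IsRGF w) : bk w ≤ n := by
  apply Finset.sup_le
  intro i _
  have := rgf_le hw i
  have := i.isLt
  omega

open scoped Classical in
noncomputable def RG (n k : ℕ) : Finset (Fin n → ℕ) :=
  (Fintype.piFinset fun _ : Fin n => Finset.range (n+1)).filter fun w => IsRGF w ∧ bk w = k

lemma mem_RG {k : ℕ} {w : Fin n → ℕ} :
    w ∈ RG n k ↔ (∀ i, w i < n + 1) ∧ IsRGF w ∧ bk w = k := by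
  classical
  simp [RG, Fintype.mem_piFinset, Finset.mem_range]

lemma sum_RG_succ (k : ℕ) (hk : 1 ≤ k) (F : (Fin (n+1) → ℕ) → Polynomial ℚ) :
    ∑ w ∈ RG (n+1) k, F w
      = (∑ p ∈ RG n (k-1), F (Fin.snoc p k))
        + ∑ p ∈ RG n k, ∑ j ∈ Finset.Icc 1 k, F (Fin.snoc p j) := by
  classical
  have hstep : ∑ w ∈ RG (n+1) k, F w
      = ∑ pa ∈ (RG n (k-1) ×ˢ ({k} : Finset ℕ)) ∪ (RG n k ×ˢ Finset.Icc 1 k),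
          F (Fin.snoc pa.1 pa.2) := by
    apply Finset.sum_nbij' (fun w => (Fin.init w, w (last n))) (fun pa => Fin.snoc pa.1 pa.2)
    · intro w hw
      rw [mem_RG] at hw
      obtain ⟨hbound, hrgf, hbk⟩ := hw
      have hinit : IsRGF (Fin.init w) := isRGF_init hrgf
      have hlast := last_le_bk_init hrgf
      have hmax : max (bk (Fin.init w)) (w (last n)) = k := by rw [← bk_eq_max, hbk]
      have hbound' : ∀ i : Fin n, Fin.init w i < n + 1 := by
        intro i
        have h1 := rgf_le hrgf (castSucc i)
        simp only [Fin.coe_castSucc] at h1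
        have h3 : (i:ℕ) < n := i.isLt
        rw [init_apply]
        omega
      rcases Nat.lt_or_ge (w (last n)) (bk (Fin.init w) + 1) with hc | hc
      · have hbki : bk (Fin.init w) = k := by omega
        apply Finset.mem_union_right
        rw [Finset.mem_product, mem_RG]
        exact ⟨⟨hbound', hinit, hbki⟩, Finset.mem_Icc.mpr ⟨hlast.1, by omega⟩⟩
      · have hwl : w (last n) = bk (Fin.init w) + 1 := by omega
        have hbki : bk (Fin.init w) = k - 1 := by omega
        apply Finset.mem_union_left
        rw [Finset.mem_product, mem_RG]
        refine ⟨⟨hbound', hinit, hbki⟩, ?_⟩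
        simp only [Finset.mem_singleton]
        omega
    · intro pa hpa
      rcases Finset.mem_union.mp hpa with h | h <;> rw [Finset.mem_product, mem_RG] at h
      · obtain ⟨⟨hbound, hrgf, hbk⟩, hk2⟩ := h
        simp only [Finset.mem_singleton] at hk2
        subst hk2
        rw [mem_RG]
        have hbkn : bk pa.1 ≤ n := bk_le hrgf
        refine ⟨?_, isRGF_snoc hrgf hk (by omega), ?_⟩
        · intro i
          rcases Fin.eq_castSucc_or_eq_last i with ⟨j, rfl⟩ | rfl
          · have := hbound j
            simp only [Fin.snoc_castSucc]
            omega
          · simp only [Fin.snoc_last]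
            omega
        · rw [bk_snoc]
          omega
      · obtain ⟨⟨hbound, hrgf, hbk⟩, hj⟩ := h
        rw [Finset.mem_Icc] at hj
        rw [mem_RG]
        have hbkn : bk pa.1 ≤ n := bk_le hrgf
        refine ⟨?_, isRGF_snoc hrgf hj.1 (by omega), ?_⟩
        · intro i
          rcases Fin.eq_castSucc_or_eq_last i with ⟨j, rfl⟩ | rfl
          · have := hbound j
            simp only [Fin.snoc_castSucc]
            omega
          · simp only [Fin.snoc_last]
            omega
        · rw [bk_snoc]
          omega
    · intro w _
      exact Fin.snoc_init_self w
    · intro pa _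
      rw [Fin.init_snoc, Fin.snoc_last]
    · intro w _
      rw [Fin.snoc_init_self w]
  rw [hstep, Finset.sum_union, Finset.sum_product, Finset.sum_product]
  · congr 1
    apply Finset.sum_congr rfl
    intro p _
    rw [Finset.sum_singleton]
  · rw [Finset.disjoint_left]
    rintro ⟨p, a⟩ h1 h2
    rw [Finset.mem_product, mem_RG] at h1 h2
    have e1 := h1.1.2.2
    have e2 := h2.1.2.2
    omega

lemma qint_split (k : ℕ) (hk : 1 ≤ k) :
    qint k = 1 + ∑ i ∈ Finset.Icc 1 (k-1), (Polynomial.X : Polynomial ℚ) ^ i := by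
  unfold qint
  have : Finset.range k = insert 0 (Finset.Icc 1 (k-1)) := by
    ext j
    simp only [Finset.mem_range, Finset.mem_insert, Finset.mem_Icc]
    omega
  rw [this, Finset.sum_insert (by simp), pow_zero]

lemma sum_pow_f (k : ℕ) (hk : 1 ≤ k) (S : Finset ℕ) (hS : S ⊆ Finset.Icc 2 k) :
    ∑ j ∈ Finset.Icc 2 k, (Polynomial.X : Polynomial ℚ) ^
        (1 + (S.filter (· < j)).card + (if j ∈ S then 0 else k - j))
      = ∑ i ∈ Finset.Icc 1 (k-1), (Polynomial.X : Polynomial ℚ) ^ i := by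
  classical
  set f : ℕ → ℕ := fun j => 1 + (S.filter (· < j)).card + (if j ∈ S then 0 else k - j)
    with hfdef
  have hnu_mono : ∀ {j₁ j₂ : ℕ}, j₁ ≤ j₂ →
      (S.filter (· < j₁)).card ≤ (S.filter (· < j₂)).card := by
    intro j₁ j₂ h
    apply Finset.card_le_card
    intro x hx
    simp only [Finset.mem_filter] at hx ⊢
    exact ⟨hx.1, by omega⟩
  have hnu_strict : ∀ {j₁ j₂ : ℕ}, j₁ < j₂ → j₁ ∈ S →
      (S.filter (· < j₁)).card < (S.filter (· < j₂)).card := by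
    intro j₁ j₂ h hmem
    apply Finset.card_lt_card
    constructor
    · intro x hx
      simp only [Finset.mem_filter] at hx ⊢
      exact ⟨hx.1, by omega⟩
    · intro hsub
      have : j₁ ∈ S.filter (· < j₂) := Finset.mem_filter.mpr ⟨hmem, h⟩
      have := hsub this
      simp only [Finset.mem_filter] at this
      omega
  have hnu_le : ∀ {j : ℕ}, 2 ≤ j → (S.filter (· < j)).card ≤ j - 2 := by
    intro j hj
    have hsub : S.filter (· < j) ⊆ Finset.Icc 2 (j-1) := by
      intro x hx
      simp only [Finset.mem_filter] at hx
      have := Finset.mem_Icc.mp (hS hx.1)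
      rw [Finset.mem_Icc]
      omega
    have := Finset.card_le_card hsub
    rw [Nat.card_Icc] at this
    omega
  have hnu_gap : ∀ {j₁ j₂ : ℕ}, j₁ < j₂ → j₁ ∉ S →
      (S.filter (· < j₂)).card ≤ (S.filter (· < j₁)).card + (j₂ - j₁ - 1) := by
    intro j₁ j₂ h hj₁
    have hsub : S.filter (· < j₂) ⊆ S.filter (· < j₁) ∪ Finset.Icc (j₁+1) (j₂-1) := by
      intro x hx
      simp only [Finset.mem_filter] at hx
      rcases Nat.lt_or_ge x j₁ with hc | hc
      · exact Finset.mem_union_left _ (Finset.mem_filter.mpr ⟨hx.1, hc⟩)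
      · apply Finset.mem_union_right
        rw [Finset.mem_Icc]
        have : x ≠ j₁ := fun hh => hj₁ (hh ▸ hx.1)
        omega
    have h1 := Finset.card_le_card hsub
    have h2 := Finset.card_union_le (S.filter (· < j₁)) (Finset.Icc (j₁+1) (j₂-1))
    rw [Nat.card_Icc] at h2
    omega
  have hcard_le : ∀ {j : ℕ}, j ∉ S → j ≤ k → S.card ≤ (S.filter (· < j)).card + (k - j) := by
    intro j hj hjk
    have hsub : S ⊆ S.filter (· < j) ∪ Finset.Icc (j+1) k := by
      intro x hx
      rcases Nat.lt_or_ge x j with hc | hc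
      · exact Finset.mem_union_left _ (Finset.mem_filter.mpr ⟨hx, hc⟩)
      · apply Finset.mem_union_right
        have := Finset.mem_Icc.mp (hS hx)
        have : x ≠ j := fun hh => hj (hh ▸ hx)
        rw [Finset.mem_Icc]
        have := Finset.mem_Icc.mp (hS hx)
        omega
    have h1 := Finset.card_le_card hsub
    have h2 := Finset.card_union_le (S.filter (· < j)) (Finset.Icc (j+1) k)
    rw [Nat.card_Icc] at h2
    omega
  have hcard_ge : ∀ {j : ℕ}, j ∈ S → (S.filter (· < j)).card + 1 ≤ S.card := by
    intro j hj
    have hsub : insert j (S.filter (· < j)) ⊆ S := by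
      intro x hx
      rcases Finset.mem_insert.mp hx with rfl | hx
      · exact hj
      · exact (Finset.mem_filter.mp hx).1
    have h1 := Finset.card_le_card hsub
    rw [Finset.card_insert_of_notMem (by simp)] at h1
    omega
  have hinj : ∀ j₁ ∈ Finset.Icc 2 k, ∀ j₂ ∈ Finset.Icc 2 k, f j₁ = f j₂ → j₁ = j₂ := by
    have main : ∀ j₁ j₂, j₁ ∈ Finset.Icc 2 k → j₂ ∈ Finset.Icc 2 k → j₁ < j₂ → f j₁ ≠ f j₂ := by
      intro j₁ j₂ h₁ h₂ hlt
      rw [Finset.mem_Icc] at h₁ h₂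
      simp only [hfdef]
      by_cases m₁ : j₁ ∈ S <;> by_cases m₂ : j₂ ∈ S <;>
        simp only [m₁, m₂, if_true, if_false]
      · have := hnu_strict hlt m₁
        omega
      · have g1 := hcard_ge m₁
        have g2 := hcard_le m₂ h₂.2
        omega
      · have g1 := hcard_ge m₂
        have g2 := hcard_le m₁ h₁.2
        omega
      · have g1 := hnu_gap hlt m₁
        omega
    intro j₁ h₁ j₂ h₂ heq
    rcases lt_trichotomy j₁ j₂ with h | h | h
    · exact absurd heq (main j₁ j₂ h₁ h₂ h)
    · exact h
    · exact absurd heq.symm (main j₂ j₁ h₂ h₁ h)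
  have hmaps : ∀ j ∈ Finset.Icc 2 k, f j ∈ Finset.Icc 1 (k-1) := by
    intro j hj
    rw [Finset.mem_Icc] at hj
    have h1 := hnu_le hj.1
    rw [Finset.mem_Icc]
    simp only [hfdef]
    by_cases m : j ∈ S <;> simp only [m, if_true, if_false] <;> omega
  have himg : (Finset.Icc 2 k).image f = Finset.Icc 1 (k-1) := by
    apply Finset.eq_of_subset_of_card_le
    · intro x hx
      obtain ⟨j, hj, rfl⟩ := Finset.mem_image.mp hx
      exact hmaps j hj
    · rw [Finset.card_image_of_injOn (fun a ha b hb => hinj a ha b hb)]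
      rw [Nat.card_Icc, Nat.card_Icc]
      omega
  rw [← himg, Finset.sum_image (fun a ha b hb => hinj a ha b hb)]

lemma Sqt_succ_zero (n : ℕ) : Sqt (n+1) 0 = 0 := by simp [Sqt]

lemma Sqt_zero_succ (k : ℕ) : Sqt 0 (k+1) = 0 := by simp [Sqt]

lemma Sqt_succ_succ (n k : ℕ) : Sqt (n+1) (k+1) = Sqt n k + qint (k+1) * Sqt n (k+1) := by
  simp [Sqt]

open Polynomial in
lemma step_sum (n k : ℕ) (hk : 1 ≤ k)
    (ih : ∀ k' : ℕ, ∀ S : Finset ℕ, S ⊆ Finset.Icc 2 k' →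
      ∑ w ∈ RG n k', (X : Polynomial ℚ) ^ (vrs w + ∑ l ∈ S, cstat w l)
        = X ^ (∑ l ∈ S, (k' - l)) * Sqt n k')
    (S : Finset ℕ) (hS : S ⊆ Finset.Icc 2 k) :
    ∑ w ∈ RG (n+1) k, (X : Polynomial ℚ) ^ (vrs w + ∑ l ∈ S, cstat w l)
      = X ^ (∑ l ∈ S, (k - l)) * (Sqt n (k-1) + qint k * Sqt n k) := by
  classical
  rw [sum_RG_succ k hk (fun w => (X : Polynomial ℚ) ^ (vrs w + ∑ l ∈ S, cstat w l))]
  have hsub' : S.erase k ⊆ Finset.Icc 2 (k-1) := by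
    intro l hl
    have h1 := Finset.mem_erase.mp hl
    have h2 := Finset.mem_Icc.mp (hS h1.2)
    rw [Finset.mem_Icc]
    omega
  have part1 : ∑ p ∈ RG n (k-1),
      (X:Polynomial ℚ) ^ (vrs (Fin.snoc p k) + ∑ l ∈ S, cstat (Fin.snoc p k) l)
      = X ^ (∑ l ∈ S, (k - l)) * Sqt n (k-1) := by
    have hcong : ∀ p ∈ RG n (k-1),
        (X:Polynomial ℚ) ^ (vrs (Fin.snoc p k) + ∑ l ∈ S, cstat (Fin.snoc p k) l)
          = X ^ (vrs p + ∑ l ∈ S.erase k, cstat p l) * X ^ (S.erase k).card := by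
      intro p hp
      rw [mem_RG] at hp
      obtain ⟨_, hrgf, hbk⟩ := hp
      have e_vrs : vrs (Fin.snoc p k) = vrs p := by
        rw [show k = bk p + 1 by omega]
        exact vrs_snoc_newmax hrgf
      have hper : ∀ l ∈ S.erase k, cstat (Fin.snoc p k) l = cstat p l + 1 := by
        intro l hl
        have h1 := Finset.mem_erase.mp hl
        have h2 := Finset.mem_Icc.mp (hS h1.2)
        rw [cstat_snoc_ne p k l h1.1, if_pos (by omega)]
      have e_c : ∑ l ∈ S, cstat (Fin.snoc p k) l
          = ∑ l ∈ S.erase k, cstat p l + (S.erase k).card := by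
        rw [← Finset.sum_erase S (cstat_snoc_self p k), Finset.sum_congr rfl hper,
          Finset.sum_add_distrib, Finset.sum_const, smul_eq_mul, mul_one]
      rw [e_vrs, e_c, ← pow_add]
      congr 1
      omega
    have hexp : ∑ l ∈ S.erase k, (k-1-l) + (S.erase k).card = ∑ l ∈ S, (k - l) := by
      calc ∑ l ∈ S.erase k, (k-1-l) + (S.erase k).card
          = ∑ l ∈ S.erase k, ((k-1-l) + 1) := by
            rw [Finset.sum_add_distrib, Finset.sum_const, smul_eq_mul, mul_one]
        _ = ∑ l ∈ S.erase k, (k - l) := by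
            apply Finset.sum_congr rfl
            intro l hl
            have h1 := Finset.mem_erase.mp hl
            have h2 := Finset.mem_Icc.mp (hS h1.2)
            omega
        _ = ∑ l ∈ S, (k - l) := Finset.sum_erase S (Nat.sub_self k)
    rw [Finset.sum_congr rfl hcong, ← Finset.sum_mul, ih (k-1) (S.erase k) hsub',
      mul_right_comm, ← pow_add, hexp]
  have hicc : Finset.Icc 1 k = insert 1 (Finset.Icc 2 k) := by
    ext j
    simp only [Finset.mem_Icc, Finset.mem_insert]
    omega
  have part2 : ∑ p ∈ RG n k, ∑ j ∈ Finset.Icc 1 k,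
      (X:Polynomial ℚ) ^ (vrs (Fin.snoc p j) + ∑ l ∈ S, cstat (Fin.snoc p j) l)
      = X ^ (∑ l ∈ S, (k - l)) * (qint k * Sqt n k) := by
    have hsplit : ∀ p ∈ RG n k, ∑ j ∈ Finset.Icc 1 k,
        (X:Polynomial ℚ) ^ (vrs (Fin.snoc p j) + ∑ l ∈ S, cstat (Fin.snoc p j) l)
        = (X:Polynomial ℚ) ^ (vrs (Fin.snoc p 1) + ∑ l ∈ S, cstat (Fin.snoc p 1) l)
          + ∑ j ∈ Finset.Icc 2 k,
              (X:Polynomial ℚ) ^ (vrs (Fin.snoc p j) + ∑ l ∈ S, cstat (Fin.snoc p j) l) := by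
      intro p _
      rw [hicc, Finset.sum_insert (by simp)]
    rw [Finset.sum_congr rfl hsplit, Finset.sum_add_distrib]
    have tA : ∑ p ∈ RG n k,
        (X:Polynomial ℚ) ^ (vrs (Fin.snoc p 1) + ∑ l ∈ S, cstat (Fin.snoc p 1) l)
        = X ^ (∑ l ∈ S, (k - l)) * Sqt n k := by
      have hcong : ∀ p ∈ RG n k,
          (X:Polynomial ℚ) ^ (vrs (Fin.snoc p 1) + ∑ l ∈ S, cstat (Fin.snoc p 1) l)
            = X ^ (vrs p + ∑ l ∈ S, cstat p l) := by
        intro p hp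
        rw [mem_RG] at hp
        obtain ⟨_, hrgf, hbk⟩ := hp
        have hn0 : 0 < n := by
          rcases Nat.eq_zero_or_pos n with rfl | h
          · exfalso
            have : bk p = 0 := by simp [bk]
            omega
          · exact h
        have e_vrs := vrs_snoc_one hrgf hn0
        have e_c : ∑ l ∈ S, cstat (Fin.snoc p 1) l = ∑ l ∈ S, cstat p l := by
          apply Finset.sum_congr rfl
          intro l hl
          have h2 := Finset.mem_Icc.mp (hS hl)
          rw [cstat_snoc_ne p 1 l (by omega), if_neg (by omega), add_zero]
        rw [e_vrs, e_c]
      rw [Finset.sum_congr rfl hcong, ih k S hS]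
    have tB : ∑ p ∈ RG n k, ∑ j ∈ Finset.Icc 2 k,
        (X:Polynomial ℚ) ^ (vrs (Fin.snoc p j) + ∑ l ∈ S, cstat (Fin.snoc p j) l)
        = X ^ (∑ l ∈ S, (k - l)) * Sqt n k * ∑ i ∈ Finset.Icc 1 (k-1), (X:Polynomial ℚ) ^ i := by
      rw [Finset.sum_comm]
      have hj : ∀ j ∈ Finset.Icc 2 k, ∑ p ∈ RG n k,
          (X:Polynomial ℚ) ^ (vrs (Fin.snoc p j) + ∑ l ∈ S, cstat (Fin.snoc p j) l)
          = X ^ (∑ l ∈ S, (k - l)) * Sqt n k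
            * X ^ (1 + (S.filter (· < j)).card + (if j ∈ S then 0 else k - j)) := by
        intro j hjm
        have hj2 := Finset.mem_Icc.mp hjm
        have hsubj : insert j S ⊆ Finset.Icc 2 k := by
          intro x hx
          rcases Finset.mem_insert.mp hx with rfl | hx
          · rw [Finset.mem_Icc]; omega
          · exact hS hx
        have hcong : ∀ p ∈ RG n k,
            (X:Polynomial ℚ) ^ (vrs (Fin.snoc p j) + ∑ l ∈ S, cstat (Fin.snoc p j) l)
              = X ^ (vrs p + ∑ l ∈ insert j S, cstat p l)
                * X ^ (1 + (S.filter (· < j)).card) := by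
          intro p hp
          rw [mem_RG] at hp
          obtain ⟨_, hrgf, hbk⟩ := hp
          have e_vrs : vrs (Fin.snoc p j) = vrs p + 1 + cstat p j :=
            vrs_snoc_mid hrgf hj2.1 (by omega)
          have hper : ∀ l ∈ S.erase j, cstat (Fin.snoc p j) l
              = cstat p l + (if l < j then 1 else 0) := by
            intro l hl
            exact cstat_snoc_ne p j l (Finset.mem_erase.mp hl).1
          have hfe : (S.erase j).filter (· < j) = S.filter (· < j) := by
            ext x
            simp only [Finset.mem_filter, Finset.mem_erase]
            constructor
            · rintro ⟨⟨_, hx⟩, hlt⟩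
              exact ⟨hx, hlt⟩
            · rintro ⟨hx, hlt⟩
              exact ⟨⟨by omega, hx⟩, hlt⟩
          have hcf : ∑ l ∈ S.erase j, (if l < j then 1 else 0)
              = (S.filter (· < j)).card := by
            rw [← hfe, Finset.card_filter]
          have e_c : ∑ l ∈ S, cstat (Fin.snoc p j) l
              = ∑ l ∈ S.erase j, cstat p l + (S.filter (· < j)).card := by
            rw [← Finset.sum_erase S (cstat_snoc_self p j), Finset.sum_congr rfl hper,
              Finset.sum_add_distrib, hcf]
          have hins : ∑ l ∈ insert j S, cstat p l
              = cstat p j + ∑ l ∈ S.erase j, cstat p l := by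
            by_cases hjS : j ∈ S
            · rw [Finset.insert_eq_self.mpr hjS]
              exact (Finset.add_sum_erase S _ hjS).symm
            · rw [Finset.sum_insert hjS, Finset.erase_eq_of_notMem hjS]
          rw [e_vrs, e_c, ← pow_add]
          congr 1
          omega
        rw [Finset.sum_congr rfl hcong, ← Finset.sum_mul, ih k (insert j S) hsubj]
        have hei : ∑ l ∈ insert j S, (k - l)
            = ∑ l ∈ S, (k - l) + (if j ∈ S then 0 else k - j) := by
          by_cases hjS : j ∈ S
          · rw [Finset.insert_eq_self.mpr hjS, if_pos hjS, add_zero]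
          · rw [Finset.sum_insert hjS, if_neg hjS]
            omega
        rw [hei, pow_add, pow_add X (1 + (S.filter (· < j)).card) (if j ∈ S then 0 else k - j)]
        ring
      rw [Finset.sum_congr rfl hj, ← Finset.mul_sum, sum_pow_f k hk S hS]
    rw [tA, tB, qint_split k hk]
    ring
  rw [part1, part2]
  ring

open Polynomial in
lemma gS_eq : ∀ n k : ℕ, ∀ S : Finset ℕ, S ⊆ Finset.Icc 2 k →
    ∑ w ∈ RG n k, (X : Polynomial ℚ) ^ (vrs w + ∑ l ∈ S, cstat w l)
      = X ^ (∑ l ∈ S, (k - l)) * Sqt n k := by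
  intro n
  induction n with
  | zero =>
    intro k S hS
    cases k with
    | zero =>
      have hSe : S = ∅ := by
        rw [← Finset.subset_empty, ← Finset.Icc_eq_empty (by omega : ¬(2:ℕ) ≤ 0)]
        exact hS
      subst hSe
      have hR : RG 0 0 = Fintype.piFinset fun _ : Fin 0 => Finset.range 1 := by
        classical
        unfold RG
        rw [Finset.filter_congr_decidable]
        apply Finset.filter_true_of_mem
        intro w _
        refine ⟨⟨fun i => i.elim0, fun i => i.elim0, fun i => i.elim0⟩, ?_⟩
        simp [bk]
      rw [hR]
      have hone : ∀ w ∈ Fintype.piFinset fun _ : Fin 0 => Finset.range 1,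
          (X : Polynomial ℚ) ^ (vrs w + ∑ l ∈ (∅ : Finset ℕ), cstat w l) = 1 := by
        intro w _
        have : vrs w = 0 := by simp [vrs]
        rw [this]
        simp
      rw [Finset.sum_congr rfl hone, Finset.sum_const, Fintype.card_piFinset]
      simp [Sqt]
    | succ k' =>
      have hempty : RG 0 (k'+1) = ∅ := by
        apply Finset.eq_empty_of_forall_notMem
        intro w hw
        rw [mem_RG] at hw
        have : bk w = 0 := by simp [bk]
        omega
      rw [hempty, Finset.sum_empty, Sqt_zero_succ, mul_zero]
  | succ n ih =>
    intro k S hS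
    cases k with
    | zero =>
      have hempty : RG (n+1) 0 = ∅ := by
        apply Finset.eq_empty_of_forall_notMem
        intro w hw
        rw [mem_RG] at hw
        have h1 : w ⟨0, Nat.succ_pos n⟩ = 1 := hw.2.1.2.1 _ rfl
        have h2 := hw.2.2
        have h3 := Finset.le_sup (f := w) (mem_univ ⟨0, Nat.succ_pos n⟩)
        unfold bk at h2
        omega
      rw [hempty, Finset.sum_empty, Sqt_succ_zero, mul_zero]
    | succ k' =>
      have := step_sum n (k'+1) (by omega) ih S hS
      rw [this, Sqt_succ_succ]
      norm_num

end RGFaux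

open scoped Classical in
/-- The sum of q^{vrs(w)} over all RGFs of length n with maximum letter k is S̃_q(n,k). -/
theorem stmt9 (n k : ℕ) (hk : 1 ≤ k) (hn : k ≤ n) :
    ∑ w ∈ (Finset.univ : Finset (Fin n → Fin (n + 1))).filter
        (fun w => IsRGF (fun i => (w i : ℕ)) ∧ bk (fun i => (w i : ℕ)) = k),
      (Polynomial.X : Polynomial ℚ) ^ vrs (fun i => (w i : ℕ)) = Sqt n k := by
  classical
  have hglue : ∑ w ∈ (Finset.univ : Finset (Fin n → Fin (n + 1))).filter
        (fun w => IsRGF (fun i => (w i : ℕ)) ∧ bk (fun i => (w i : ℕ)) = k),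
      (Polynomial.X : Polynomial ℚ) ^ vrs (fun i => (w i : ℕ))
      = ∑ w ∈ RGFaux.RG n k, (Polynomial.X : Polynomial ℚ) ^ vrs w := by
    apply Finset.sum_nbij' (fun w => (fun i => (w i : ℕ)))
      (fun p => fun i => (⟨p i % (n+1), Nat.mod_lt _ (Nat.succ_pos n)⟩ : Fin (n+1)))
    · intro w hw
      rw [Finset.mem_filter] at hw
      rw [RGFaux.mem_RG]
      exact ⟨fun i => (w i).isLt, hw.2⟩
    · intro p hp
      rw [RGFaux.mem_RG] at hp
      rw [Finset.mem_filter]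
      refine ⟨Finset.mem_univ _, ?_⟩
      have heq : (fun i => ((⟨p i % (n+1), Nat.mod_lt _ (Nat.succ_pos n)⟩ : Fin (n+1)) : ℕ))
          = p := by
        funext i
        exact Nat.mod_eq_of_lt (hp.1 i)
      rw [heq]
      exact hp.2
    · intro w _
      funext i
      exact Fin.ext (Nat.mod_eq_of_lt (w i).isLt)
    · intro p hp
      rw [RGFaux.mem_RG] at hp
      funext i
      exact Nat.mod_eq_of_lt (hp.1 i)
    · intro w _
      rfl
  rw [hglue]
  have h := RGFaux.gS_eq n k ∅ (Finset.empty_subset _)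
  simpa using h
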